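/- Let r be a nonzero rational number. If S is a subset of ℚ that contains 0 and r, and is closed under addition, negation, the r-scaled multiplication x ⊛ y := x * y / r, and r-scaled inversion (for every nonzero x ∈ S, the element r^2 / x belongs to S), then S = ℚ. That is, the r-scaled rational structure is a smallest field: it has no proper substructure closed under its scaled field operations. -/

import Mathlib

/-- The `r`-scaled rational structure is a smallest field: any subset of `ℚ`
containing `0` and the scaled identity `r`, closed under addition, negation,
the scaled multiplication `x ⊛ y := x * y / r`, and scaled inversion
`x ↦ r^2 / x`, is all of `ℚ`. -/
theorem scaled_rat_smallest_field (r : ℚ) (hr : r ≠ 0) (S : Set ℚ)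
    (h0 : (0 : ℚ) ∈ S) (h1 : r ∈ S)
    (hadd : ∀ x ∈ S, ∀ y ∈ S, x + y ∈ S)
    (hneg : ∀ x ∈ S, -x ∈ S)
    (hmul : ∀ x ∈ S, ∀ y ∈ S, x * y / r ∈ S)
    (hinv : ∀ x ∈ S, x ≠ 0 → r ^ 2 / x ∈ S) :
    S = Set.univ := by
  -- natural multiples of r
  have hnat : ∀ n : ℕ, (n : ℚ) * r ∈ S := by
    intro n
    induction n with
    | zero => simpa using h0
    | succ k ih =>
      have := hadd _ ih _ h1
      convert this using 1
      push_cast; ring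
  have hint : ∀ n : ℤ, (n : ℚ) * r ∈ S := by
    intro n
    have hA := hnat n.natAbs
    rcases Int.natAbs_eq n with h | h
    · rw [h, Int.cast_natCast]; exact hA
    · rw [h, Int.cast_neg, Int.cast_natCast, neg_mul]; exact hneg _ hA
  -- r / n for nonzero naturals
  have hdiv : ∀ n : ℕ, n ≠ 0 → r / (n : ℚ) ∈ S := by
    intro n hn
    have hmem := hnat n
    have hne : (n : ℚ) * r ≠ 0 := by
      have : (n : ℚ) ≠ 0 := Nat.cast_ne_zero.mpr hn
      exact mul_ne_zero this hr
    have := hinv _ hmem hne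
    convert this using 1
    field_simp
  have key : ∀ q : ℚ, r * q ∈ S := by
    intro q
    have hden : (q.den : ℚ) ≠ 0 := by exact_mod_cast q.den_nz
    have := hmul _ (hint q.num) _ (hdiv q.den q.den_nz)
    have heq : (q.num : ℚ) * r * (r / (q.den : ℚ)) / r = r * q := by
      conv_rhs => rw [← Rat.num_div_den q]
      field_simp
    rw [heq] at this
    exact this
  ext x
  simp only [Set.mem_univ, iff_true]
  have := key (x / r)
  rwa [mul_div_cancel₀ _ hr] at this
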